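/- There exist continuous functions f, g, h : S¹ → [0,1] such that: f² + g² + h² = f; gh = 0; f(1) = 1; g(1) = h(1) = 0; the functions x ↦ f(e^{2πix}), x ↦ g(e^{2πix}), x ↦ h(e^{2πix}) on [0,1] are Lipschitz; x ↦ f(e^{2πix}) is continuously differentiable on [0,1]; f(−1) = 0; h(e^{2πix}) = 0 for all x ∈ [0,1/2]; and h(e^{2πix})² = f(e^{2πix}) − f(e^{2πix})² for all x ∈ [1/2,1]. -/

import Mathlib

open Complex Real

lemma loring_exp_re (x : ℝ) :
    (Complex.exp (2 * Real.pi * Complex.I * x)).re = Real.cos (2 * Real.pi * x) := by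
  have : (2 * Real.pi * Complex.I * x : ℂ) = ((2 * Real.pi * x : ℝ) : ℂ) * Complex.I := by
    push_cast; ring
  rw [this, Complex.exp_ofReal_mul_I_re]

lemma loring_exp_im (x : ℝ) :
    (Complex.exp (2 * Real.pi * Complex.I * x)).im = Real.sin (2 * Real.pi * x) := by
  have : (2 * Real.pi * Complex.I * x : ℂ) = ((2 * Real.pi * x : ℝ) : ℂ) * Complex.I := by
    push_cast; ring
  rw [this, Complex.exp_ofReal_mul_I_im]

lemma loring_circle (z : ℂ) (hz : ‖z‖ = 1) : z.re ^ 2 + z.im ^ 2 = 1 := by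
  have := Complex.sq_norm z
  rw [Complex.normSq_apply] at this
  rw [hz] at this
  nlinarith

lemma loring_abs_cos_sub : ∀ a b : ℝ, |Real.cos a - Real.cos b| ≤ |a - b| := by
  intro a b
  rw [Real.cos_sub_cos]
  have h1 : |Real.sin ((a - b) / 2)| ≤ |(a - b) / 2| := Real.abs_sin_le_abs
  have h2 : |Real.sin ((a + b) / 2)| ≤ 1 := Real.abs_sin_le_one _
  rw [abs_mul, abs_mul]
  have h3 : |(a - b) / 2| = |a - b| / 2 := by rw [abs_div]; norm_num
  rw [h3] at h1
  have h4 : |(-2 : ℝ)| = 2 := by norm_num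
  rw [h4]
  nlinarith [abs_nonneg (Real.sin ((a - b) / 2)), abs_nonneg (Real.sin ((a + b) / 2)),
    mul_nonneg (sub_nonneg.2 h2) (abs_nonneg (Real.sin ((a - b) / 2)))]

lemma loring_abs_sin_sub : ∀ a b : ℝ, |Real.sin a - Real.sin b| ≤ |a - b| := by
  intro a b
  rw [Real.sin_sub_sin]
  have h1 : |Real.sin ((a - b) / 2)| ≤ |(a - b) / 2| := Real.abs_sin_le_abs
  have h2 : |Real.cos ((a + b) / 2)| ≤ 1 := Real.abs_cos_le_one _
  rw [abs_mul, abs_mul]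
  have h3 : |(a - b) / 2| = |a - b| / 2 := by rw [abs_div]; norm_num
  rw [h3] at h1
  have h4 : |(2 : ℝ)| = 2 := by norm_num
  rw [h4]
  nlinarith [abs_nonneg (Real.sin ((a - b) / 2)), abs_nonneg (Real.cos ((a + b) / 2)),
    mul_nonneg (sub_nonneg.2 h2) (abs_nonneg (Real.sin ((a - b) / 2)))]

lemma loring_lip (F : ℝ → ℝ) (hF : ∀ a b : ℝ, |F a - F b| ≤ |a - b|) :
    LipschitzWith ⟨Real.pi, Real.pi_pos.le⟩ (fun x : ℝ => F (2 * Real.pi * x) / 2) := by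
  apply LipschitzWith.of_dist_le_mul
  intro a b
  simp only [Real.dist_eq, NNReal.coe_mk]
  have h1 := hF (2 * Real.pi * a) (2 * Real.pi * b)
  have h2 : |2 * Real.pi * a - 2 * Real.pi * b| = 2 * Real.pi * |a - b| := by
    rw [show 2 * Real.pi * a - 2 * Real.pi * b = 2 * Real.pi * (a - b) by ring,
      abs_mul, abs_of_pos (by positivity : (0:ℝ) < 2 * Real.pi)]
  have h3 : |F (2 * Real.pi * a) / 2 - F (2 * Real.pi * b) / 2|
      = |F (2 * Real.pi * a) - F (2 * Real.pi * b)| / 2 := by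
    rw [div_sub_div_same, abs_div]; norm_num
  rw [h3]
  rw [h2] at h1
  change _ ≤ Real.pi * |a - b|
  linarith

/-- There exist continuous functions `f, g, h : S¹ → [0,1]` with `f² + g² + h² = f`,
`gh = 0`, `f(1) = 1`, `g(1) = h(1) = 0`, such that `x ↦ f(e^{2πix})`, `x ↦ g(e^{2πix})`,
`x ↦ h(e^{2πix})` are Lipschitz on `[0,1]`, `x ↦ f(e^{2πix})` is continuously
differentiable on `[0,1]`, `f(-1) = 0`, `h(e^{2πix}) = 0` for `x ∈ [0,1/2]`, and
`h(e^{2πix})² = f(e^{2πix}) - f(e^{2πix})²` for `x ∈ [1/2,1]`. -/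
theorem exists_loring_functions :
    ∃ f g h : ℂ → ℝ,
      ContinuousOn f (Metric.sphere (0 : ℂ) 1) ∧
      ContinuousOn g (Metric.sphere (0 : ℂ) 1) ∧
      ContinuousOn h (Metric.sphere (0 : ℂ) 1) ∧
      (∀ z : ℂ, ‖z‖ = 1 →
        f z ∈ Set.Icc (0 : ℝ) 1 ∧ g z ∈ Set.Icc (0 : ℝ) 1 ∧ h z ∈ Set.Icc (0 : ℝ) 1) ∧
      (∀ z : ℂ, ‖z‖ = 1 → (f z) ^ 2 + (g z) ^ 2 + (h z) ^ 2 = f z) ∧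
      (∀ z : ℂ, ‖z‖ = 1 → g z * h z = 0) ∧
      f 1 = 1 ∧ g 1 = 0 ∧ h 1 = 0 ∧
      (∃ K : NNReal,
        LipschitzOnWith K (fun x : ℝ => f (Complex.exp (2 * Real.pi * Complex.I * x)))
          (Set.Icc (0 : ℝ) 1)) ∧
      (∃ K : NNReal,
        LipschitzOnWith K (fun x : ℝ => g (Complex.exp (2 * Real.pi * Complex.I * x)))
          (Set.Icc (0 : ℝ) 1)) ∧
      (∃ K : NNReal,
        LipschitzOnWith K (fun x : ℝ => h (Complex.exp (2 * Real.pi * Complex.I * x)))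
          (Set.Icc (0 : ℝ) 1)) ∧
      ContDiffOn ℝ 1 (fun x : ℝ => f (Complex.exp (2 * Real.pi * Complex.I * x)))
        (Set.Icc (0 : ℝ) 1) ∧
      f (-1) = 0 ∧
      (∀ x : ℝ, x ∈ Set.Icc (0 : ℝ) (1 / 2) →
        h (Complex.exp (2 * Real.pi * Complex.I * x)) = 0) ∧
      (∀ x : ℝ, x ∈ Set.Icc (1 / 2 : ℝ) 1 →
        (h (Complex.exp (2 * Real.pi * Complex.I * x))) ^ 2 =
          f (Complex.exp (2 * Real.pi * Complex.I * x)) -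
            (f (Complex.exp (2 * Real.pi * Complex.I * x))) ^ 2) := by
  refine ⟨fun z => (z.re + 1) / 2, fun z => max z.im 0 / 2, fun z => max (-z.im) 0 / 2,
    ?_, ?_, ?_, ?_, ?_, ?_, ?_, ?_, ?_, ?_, ?_, ?_, ?_, ?_, ?_, ?_⟩
  · fun_prop
  · fun_prop
  · fun_prop
  · intro z hz
    have h1 := Complex.abs_re_le_norm z
    have h2 := Complex.abs_im_le_norm z
    rw [hz] at h1 h2
    rw [abs_le] at h1 h2
    refine ⟨⟨by linarith, by linarith⟩, ⟨by positivity, ?_⟩, ⟨by positivity, ?_⟩⟩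
    · have : max z.im 0 ≤ 1 := max_le h2.2 zero_le_one
      linarith
    · have : max (-z.im) 0 ≤ 1 := max_le (by linarith [h2.1]) zero_le_one
      linarith
  · intro z hz
    dsimp only
    have hc := loring_circle z hz
    rcases le_total z.im 0 with h | h
    · rw [max_eq_right h, max_eq_left (by linarith)]
      nlinarith
    · rw [max_eq_left h, max_eq_right (by linarith)]
      nlinarith
  · intro z hz
    dsimp only
    rcases le_total z.im 0 with h | h
    · rw [max_eq_right h]; ring
    · rw [max_eq_right (by linarith : -z.im ≤ 0)]; ring
  · norm_num
  · norm_num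
  · norm_num
  · refine ⟨⟨Real.pi, Real.pi_pos.le⟩, ?_⟩
    apply LipschitzWith.lipschitzOnWith
    have := loring_lip (fun t => Real.cos t + 1)
      (fun a b => by simpa using loring_abs_cos_sub a b)
    convert this using 2 with x
    dsimp only
    rw [loring_exp_re]
  · refine ⟨⟨Real.pi, Real.pi_pos.le⟩, ?_⟩
    apply LipschitzWith.lipschitzOnWith
    have := loring_lip (fun t => max (Real.sin t) 0)
      (fun a b => le_trans (abs_max_sub_max_le_abs _ _ _) (loring_abs_sin_sub a b))
    convert this using 2 with x
    dsimp only
    rw [loring_exp_im]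
  · refine ⟨⟨Real.pi, Real.pi_pos.le⟩, ?_⟩
    apply LipschitzWith.lipschitzOnWith
    have := loring_lip (fun t => max (-Real.sin t) 0)
      (fun a b => le_trans (abs_max_sub_max_le_abs _ _ _)
        (by rw [neg_sub_neg, abs_sub_comm]; exact loring_abs_sin_sub a b))
    convert this using 2 with x
    dsimp only
    rw [loring_exp_im]
  · apply ContDiff.contDiffOn
    have : (fun x : ℝ => ((Complex.exp (2 * Real.pi * Complex.I * x)).re + 1) / 2)
        = fun x : ℝ => (Real.cos (2 * Real.pi * x) + 1) / 2 := by
      funext x; rw [loring_exp_re]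
    rw [this]
    exact ((Real.contDiff_cos.comp ((contDiff_const).mul contDiff_id)).add
      contDiff_const).div_const 2
  · norm_num
  · intro x hx
    dsimp only
    rw [loring_exp_im]
    have : 0 ≤ Real.sin (2 * Real.pi * x) := by
      apply Real.sin_nonneg_of_nonneg_of_le_pi
      · nlinarith [hx.1, Real.pi_pos]
      · nlinarith [hx.2, Real.pi_pos]
    rw [max_eq_right (by linarith)]
    norm_num
  · intro x hx
    dsimp only
    rw [loring_exp_im, loring_exp_re]
    have hs : Real.sin (2 * Real.pi * x) ≤ 0 := by
      rw [← Real.sin_sub_two_pi]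
      apply Real.sin_nonpos_of_nonpos_of_neg_pi_le
      · nlinarith [hx.2, Real.pi_pos]
      · nlinarith [hx.1, Real.pi_pos]
    rw [max_eq_left (by linarith)]
    have hc := Real.sin_sq_add_cos_sq (2 * Real.pi * x)
    nlinarith
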